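/- Let α > -1 and n ≥ 1. If x_k and x_{k+1} are consecutive zeros of L_n^α, then there is exactly one zero of L_{n-1}^{α+2} in the open interval (x_k, x_{k+1}); equivalently, writing 0 < x_1 < ... < x_n for the zeros of L_n^α and 0 < X_1 < ... < X_{n-1} for the zeros of L_{n-1}^{α+2}, we have x_k < X_k < x_{k+1} for each k = 1, ..., n-1. -/

import Mathlib

open Finset

/-- Generalized Laguerre polynomial `L_n^α(x) = ∑_{k=0}^n (-1)^k C(n+α, n-k) x^k / k!`,
where `C(n+α, n-k) = (∏_{i=1}^{n-k} (α+k+i)) / (n-k)!`. -/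
noncomputable def laguerre (α : ℝ) (n : ℕ) (x : ℝ) : ℝ :=
  ∑ k ∈ Finset.range (n + 1),
    (-1 : ℝ) ^ k * (∏ i ∈ Finset.range (n - k), (α + k + 1 + i)) /
      ((Nat.factorial (n - k) : ℝ) * (Nat.factorial k : ℝ)) * x ^ k

noncomputable def lcoef (α : ℝ) (n k : ℕ) : ℝ :=
  (-1 : ℝ) ^ k * (∏ i ∈ Finset.range (n - k), (α + k + 1 + i)) /
      ((Nat.factorial (n - k) : ℝ) * (Nat.factorial k : ℝ))

lemma laguerre_eq_sum (α : ℝ) (n : ℕ) (x : ℝ) :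
    laguerre α n x = ∑ k ∈ Finset.range (n + 1), lcoef α n k * x ^ k := rfl

lemma laguerre_zero (α : ℝ) (x : ℝ) : laguerre α 0 x = 1 := by
  simp [laguerre]

lemma laguerre_one (α : ℝ) (x : ℝ) : laguerre α 1 x = α + 1 - x := by
  simp [laguerre, Finset.sum_range_succ]
  ring

lemma prod_pos_of_gt_neg_one {α : ℝ} (hα : α > -1) (k m : ℕ) :
    0 < ∏ i ∈ Finset.range m, (α + k + 1 + i) := by
  apply Finset.prod_pos
  intro i _
  have : (0:ℝ) ≤ k := by positivity
  have : (0:ℝ) ≤ i := by positivity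
  nlinarith

lemma laguerre_pos {α : ℝ} (hα : α > -1) (n : ℕ) {x : ℝ} (hx : x ≤ 0) :
    0 < laguerre α n x := by
  rw [laguerre_eq_sum]
  have key : ∀ k, lcoef α n k * x ^ k =
      ((∏ i ∈ Finset.range (n - k), (α + k + 1 + i)) /
      ((Nat.factorial (n - k) : ℝ) * (Nat.factorial k : ℝ))) * (-x) ^ k := by
    intro k
    rw [neg_pow]
    unfold lcoef
    ring
  apply Finset.sum_pos'
  · intro k _
    rw [key k]
    have h1 := prod_pos_of_gt_neg_one hα k (n - k)
    have h2 : (0:ℝ) < (Nat.factorial (n - k) : ℝ) * (Nat.factorial k : ℝ) := by positivity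
    have h3 : (0:ℝ) ≤ (-x) ^ k := pow_nonneg (by linarith) k
    exact mul_nonneg (le_of_lt (div_pos h1 h2)) h3
  · refine ⟨0, by simp, ?_⟩
    rw [key 0]
    have h1 := prod_pos_of_gt_neg_one hα 0 (n - 0)
    have h2 : (0:ℝ) < (Nat.factorial (n - 0) : ℝ) * (Nat.factorial 0 : ℝ) := by positivity
    simpa using div_pos h1 h2

lemma lcoef_deriv (α : ℝ) (n k : ℕ) :
    lcoef α (n+1) (k+1) * (k+1 : ℝ) = -(lcoef (α+1) n k) := by
  unfold lcoef
  rw [Nat.succ_sub_succ]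
  have hprod : ∏ i ∈ Finset.range (n - k), (α + (k+1 : ℕ) + 1 + i)
      = ∏ i ∈ Finset.range (n - k), ((α+1) + (k:ℕ) + 1 + i) := by
    apply Finset.prod_congr rfl
    intro i _
    push_cast
    ring
  rw [hprod, Nat.factorial_succ]
  have h1 : (Nat.factorial (n - k) : ℝ) ≠ 0 := Nat.cast_ne_zero.mpr (Nat.factorial_ne_zero _)
  have h2 : (Nat.factorial k : ℝ) ≠ 0 := Nat.cast_ne_zero.mpr (Nat.factorial_ne_zero _)
  have h3 : ((k:ℝ) + 1) ≠ 0 := by positivity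
  push_cast
  rw [pow_succ]
  field_simp

lemma laguerre_hasDerivAt (α : ℝ) (n : ℕ) (x : ℝ) :
    HasDerivAt (fun y => laguerre α (n+1) y) (-(laguerre (α+1) n x)) x := by
  have H : HasDerivAt (fun y => ∑ k ∈ Finset.range (n+2), lcoef α (n+1) k * y^k)
      (∑ k ∈ Finset.range (n+2), lcoef α (n+1) k * ((k:ℝ) * x^(k-1))) x :=
    HasDerivAt.fun_sum (fun k _ => (hasDerivAt_pow k x).const_mul _)
  have hval : (∑ k ∈ Finset.range (n+2), lcoef α (n+1) k * ((k:ℝ) * x^(k-1)))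
      = -(laguerre (α+1) n x) := by
    rw [Finset.sum_range_succ' (fun k => lcoef α (n+1) k * ((k:ℝ) * x^(k-1))) (n+1)]
    rw [laguerre_eq_sum, ← Finset.sum_neg_distrib]
    simp only [Nat.cast_zero, zero_mul, mul_zero, add_zero]
    apply Finset.sum_congr rfl
    intro k _
    have : (k+1 : ℕ) - 1 = k := rfl
    rw [this]
    push_cast
    rw [← mul_assoc, mul_comm (lcoef α (n+1) (k+1)) ((k:ℝ)+1), mul_comm]
    rw [mul_comm ((k:ℝ)+1) (lcoef α (n+1) (k+1)), lcoef_deriv]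
    ring
  rw [← hval]
  exact H

-- termwise lemma T1
lemma T1 (α : ℝ) (k j : ℕ) :
    ((k:ℝ)+(j:ℝ)+2) * lcoef α (k+j+2) (k+1) + lcoef (α+2) (k+j+1) k
      = (α+1) * lcoef (α+1) (k+j+1) (k+1) := by
  unfold lcoef
  have e1 : (k+j+2) - (k+1) = j+1 := by omega
  have e2 : (k+j+1) - k = j+1 := by omega
  have e3 : (k+j+1) - (k+1) = j := by omega
  rw [e1, e2, e3]
  have hp1 : ∏ i ∈ Finset.range (j+1), (α + ((k+1:ℕ):ℝ) + 1 + i)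
      = (∏ i ∈ Finset.range j, ((α+1) + ((k+1:ℕ):ℝ) + 1 + i)) * (α + (k:ℝ) + 2) := by
    rw [Finset.prod_range_succ']
    congr 1
    · apply Finset.prod_congr rfl; intro i _; push_cast; ring
    · push_cast; ring
  have hp2 : ∏ i ∈ Finset.range (j+1), ((α+2) + (k:ℝ) + 1 + i)
      = (∏ i ∈ Finset.range j, ((α+1) + ((k+1:ℕ):ℝ) + 1 + i)) * (α + (k:ℝ) + 3 + j) := by
    rw [Finset.prod_range_succ]
    congr 1
    · apply Finset.prod_congr rfl; intro i _; push_cast; ring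
    · push_cast; ring
  rw [hp1, hp2]
  set Q := ∏ i ∈ Finset.range j, ((α+1) + ((k+1:ℕ):ℝ) + 1 + i) with hQ
  rw [Nat.factorial_succ (j), Nat.factorial_succ (k)]
  have h1 : (Nat.factorial j : ℝ) ≠ 0 := Nat.cast_ne_zero.mpr (Nat.factorial_ne_zero _)
  have h2 : (Nat.factorial k : ℝ) ≠ 0 := Nat.cast_ne_zero.mpr (Nat.factorial_ne_zero _)
  have h3 : ((j:ℝ) + 1) ≠ 0 := by positivity
  have h4 : ((k:ℝ) + 1) ≠ 0 := by positivity
  rw [pow_succ]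
  push_cast
  field_simp
  ring

-- boundary k = m
lemma TB (α : ℝ) (m : ℕ) :
    ((m:ℝ)+1) * lcoef α (m+1) (m+1) + lcoef (α+2) m m = 0 := by
  unfold lcoef
  rw [Nat.sub_self, Nat.sub_self]
  simp only [Finset.range_zero, Finset.prod_empty, Nat.factorial_zero]
  rw [Nat.factorial_succ]
  have h2 : (Nat.factorial m : ℝ) ≠ 0 := Nat.cast_ne_zero.mpr (Nat.factorial_ne_zero _)
  have h4 : ((m:ℝ) + 1) ≠ 0 := by positivity
  rw [pow_succ]
  push_cast
  field_simp
  ring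

-- constant term
lemma T0 (α : ℝ) (m : ℕ) :
    ((m:ℝ)+1) * lcoef α (m+1) 0 = (α+1) * lcoef (α+1) m 0 := by
  unfold lcoef
  simp only [Nat.sub_zero, Nat.factorial_zero, pow_zero, Nat.cast_zero]
  have hp : ∏ i ∈ Finset.range (m+1), (α + (0:ℝ) + 1 + i)
      = (∏ i ∈ Finset.range m, ((α+1) + (0:ℝ) + 1 + i)) * (α + 1) := by
    rw [Finset.prod_range_succ']
    congr 1
    · apply Finset.prod_congr rfl; intro i _; push_cast; ring
    · norm_num
  rw [hp, Nat.factorial_succ]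
  have h2 : (Nat.factorial m : ℝ) ≠ 0 := Nat.cast_ne_zero.mpr (Nat.factorial_ne_zero _)
  have h4 : ((m:ℝ) + 1) ≠ 0 := by positivity
  push_cast
  field_simp

lemma laguerre_J (α : ℝ) (m : ℕ) (x : ℝ) :
    (α+1) * laguerre (α+1) m x = ((m:ℝ)+1) * laguerre α (m+1) x + x * laguerre (α+2) m x := by
  have hR1 : laguerre α (m+1) x
      = (∑ k ∈ Finset.range (m+1), lcoef α (m+1) (k+1) * x^(k+1)) + lcoef α (m+1) 0 := by
    rw [laguerre_eq_sum, Finset.sum_range_succ' (fun k => lcoef α (m+1) k * x^k) (m+1)]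
    simp
  have hR2 : x * laguerre (α+2) m x
      = ∑ k ∈ Finset.range (m+1), lcoef (α+2) m k * x^(k+1) := by
    rw [laguerre_eq_sum, Finset.mul_sum]
    apply Finset.sum_congr rfl
    intro k _
    ring
  have hL : laguerre (α+1) m x
      = (∑ k ∈ Finset.range m, lcoef (α+1) m (k+1) * x^(k+1)) + lcoef (α+1) m 0 := by
    rw [laguerre_eq_sum, Finset.sum_range_succ' (fun k => lcoef (α+1) m k * x^k) m]
    simp
  have hcomb : ((m:ℝ)+1) * (∑ k ∈ Finset.range (m+1), lcoef α (m+1) (k+1) * x^(k+1))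
      + (∑ k ∈ Finset.range (m+1), lcoef (α+2) m k * x^(k+1))
      = (α+1) * (∑ k ∈ Finset.range m, lcoef (α+1) m (k+1) * x^(k+1)) := by
    rw [Finset.mul_sum, Finset.mul_sum, ← Finset.sum_add_distrib, Finset.sum_range_succ]
    have hb : ((m:ℝ)+1) * (lcoef α (m+1) (m+1) * x^(m+1)) + lcoef (α+2) m m * x^(m+1)
        = 0 := by
      have h : ((m:ℝ)+1) * (lcoef α (m+1) (m+1) * x^(m+1)) + lcoef (α+2) m m * x^(m+1)
          = (((m:ℝ)+1) * lcoef α (m+1) (m+1) + lcoef (α+2) m m) * x^(m+1) := by ring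
      rw [h, TB, zero_mul]
    rw [hb, add_zero]
    apply Finset.sum_congr rfl
    intro k hk
    have hkm : k < m := Finset.mem_range.mp hk
    obtain ⟨j, rfl⟩ : ∃ j, m = k + j + 1 := ⟨m - k - 1, by omega⟩
    have ht := T1 α k j
    have e : k + j + 1 + 1 = k + j + 2 := rfl
    rw [e]
    push_cast
    linear_combination x^(k+1) * ht
  rw [hR1, hR2, hL]
  linear_combination -hcomb - T0 α m

lemma T2 (α : ℝ) (k j : ℕ) :
    (α+1)*(α+2) * lcoef (α+2) (k+j+1) (k+1) - (α+(k:ℝ)+(j:ℝ)+3) * lcoef (α+2) (k+j+1) k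
      - (α+1) * lcoef (α+3) (k+j) k
    = ((k:ℝ)+(j:ℝ)+2)*(α+(k:ℝ)+(j:ℝ)+3) * lcoef α (k+j+2) (k+1) := by
  have h2 : (Nat.factorial k : ℝ) ≠ 0 := Nat.cast_ne_zero.mpr (Nat.factorial_ne_zero _)
  have h4 : ((k:ℝ) + 1) ≠ 0 := by positivity
  cases j with
  | zero =>
    unfold lcoef
    have e1 : (k+0+1) - (k+1) = 0 := by omega
    have e2 : (k+0+1) - k = 1 := by omega
    have e3 : (k+0) - k = 0 := by omega
    have e4 : (k+0+2) - (k+1) = 1 := by omega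
    rw [e1, e2, e3, e4]
    simp only [Finset.range_zero, Finset.prod_empty, Nat.factorial_zero,
      Finset.prod_range_one, Nat.cast_zero, Nat.cast_one, Nat.factorial_one]
    rw [Nat.factorial_succ k, pow_succ]
    push_cast
    field_simp
    ring
  | succ i =>
    unfold lcoef
    have e1 : (k+(i+1)+1) - (k+1) = i+1 := by omega
    have e2 : (k+(i+1)+1) - k = i+2 := by omega
    have e3 : (k+(i+1)) - k = i+1 := by omega
    have e4 : (k+(i+1)+2) - (k+1) = i+2 := by omega
    rw [e1, e2, e3, e4]
    set M := ∏ r ∈ Finset.range i, (α + (k:ℝ) + 4 + r) with hM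
    have hA : ∏ r ∈ Finset.range (i+1), ((α+2) + ((k+1:ℕ):ℝ) + 1 + r)
        = M * (α + (k:ℝ) + 4 + i) := by
      rw [Finset.prod_range_succ]
      congr 1
      · rw [hM]; apply Finset.prod_congr rfl; intro r _; push_cast; ring
      · push_cast; ring
    have hB : ∏ r ∈ Finset.range (i+2), ((α+2) + (k:ℝ) + 1 + r)
        = (α + (k:ℝ) + 3) * (M * (α + (k:ℝ) + 4 + i)) := by
      rw [Finset.prod_range_succ']
      have h' : ∏ r ∈ Finset.range (i+1), ((α+2) + (k:ℝ) + 1 + ((r+1:ℕ):ℝ))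
          = ∏ r ∈ Finset.range (i+1), ((α+2) + ((k+1:ℕ):ℝ) + 1 + r) := by
        apply Finset.prod_congr rfl; intro r _; push_cast; ring
      rw [h', hA]; push_cast; ring
    have hC : ∏ r ∈ Finset.range (i+1), ((α+3) + (k:ℝ) + 1 + r)
        = M * (α + (k:ℝ) + 4 + i) := by
      rw [Finset.prod_range_succ]
      congr 1
      · rw [hM]; apply Finset.prod_congr rfl; intro r _; push_cast; ring
      · push_cast; ring
    have hR : ∏ r ∈ Finset.range (i+2), (α + ((k+1:ℕ):ℝ) + 1 + r)
        = (α + (k:ℝ) + 2) * (α + (k:ℝ) + 3) * M := by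
      rw [Finset.prod_range_succ']
      have h' : ∏ r ∈ Finset.range (i+1), (α + ((k+1:ℕ):ℝ) + 1 + ((r+1:ℕ):ℝ))
          = ∏ r ∈ Finset.range (i+1), (α + (k:ℝ) + 3 + r) := by
        apply Finset.prod_congr rfl; intro r _; push_cast; ring
      rw [h', Finset.prod_range_succ']
      have h'' : ∏ r ∈ Finset.range i, (α + (k:ℝ) + 3 + ((r+1:ℕ):ℝ)) = M := by
        rw [hM]; apply Finset.prod_congr rfl; intro r _; push_cast; ring
      rw [h'']; push_cast; ring
    rw [hA, hB, hC, hR]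
    rw [Nat.factorial_succ (i+1), Nat.factorial_succ i, Nat.factorial_succ k]
    have h1 : (Nat.factorial i : ℝ) ≠ 0 := Nat.cast_ne_zero.mpr (Nat.factorial_ne_zero _)
    have h3 : ((i:ℝ) + 1) ≠ 0 := by positivity
    have h5 : ((i:ℝ) + 2) ≠ 0 := by positivity
    rw [pow_succ]
    push_cast
    field_simp
    ring

lemma T0c (α : ℝ) (m : ℕ) :
    ((m:ℝ)+2)*(α+(m:ℝ)+3) * lcoef α (m+2) 0 = (α+1)*(α+2) * lcoef (α+2) (m+1) 0 := by
  unfold lcoef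
  simp only [Nat.sub_zero, Nat.factorial_zero, pow_zero, Nat.cast_zero]
  set W := ∏ i ∈ Finset.range m, (α + 3 + (i:ℝ)) with hW
  have hL : ∏ i ∈ Finset.range (m+2), (α + (0:ℝ) + 1 + i) = (α+1)*(α+2)*W := by
    rw [Finset.prod_range_succ']
    have : ∏ i ∈ Finset.range (m+1), (α + (0:ℝ) + 1 + ((i+1:ℕ):ℝ))
        = ∏ i ∈ Finset.range (m+1), (α + 2 + (i:ℝ)) := by
      apply Finset.prod_congr rfl; intro i _; push_cast; ring
    rw [this, Finset.prod_range_succ']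
    have : ∏ i ∈ Finset.range m, (α + 2 + ((i+1:ℕ):ℝ)) = W := by
      rw [hW]; apply Finset.prod_congr rfl; intro i _; push_cast; ring
    rw [this]; push_cast; ring
  have hR : ∏ i ∈ Finset.range (m+1), ((α+2) + (0:ℝ) + 1 + i) = W * (α+(m:ℝ)+3) := by
    rw [Finset.prod_range_succ]
    congr 1
    · rw [hW]; apply Finset.prod_congr rfl; intro i _; push_cast; ring
    · push_cast; ring
  rw [hL, hR]
  rw [Nat.factorial_succ (m+1), Nat.factorial_succ m]
  have h2 : (Nat.factorial m : ℝ) ≠ 0 := Nat.cast_ne_zero.mpr (Nat.factorial_ne_zero _)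
  have h3 : ((m:ℝ) + 1) ≠ 0 := by positivity
  have h4 : ((m:ℝ) + 2) ≠ 0 := by positivity
  push_cast
  field_simp
  ring

lemma TBc (α : ℝ) (m : ℕ) :
    -(α+(m:ℝ)+3) * lcoef (α+2) (m+1) (m+1)
      = ((m:ℝ)+2)*(α+(m:ℝ)+3) * lcoef α (m+2) (m+2) := by
  unfold lcoef
  rw [Nat.sub_self, Nat.sub_self]
  simp only [Finset.range_zero, Finset.prod_empty, Nat.factorial_zero]
  rw [Nat.factorial_succ (m+1)]
  have h2 : (Nat.factorial (m+1) : ℝ) ≠ 0 := Nat.cast_ne_zero.mpr (Nat.factorial_ne_zero _)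
  have h4 : ((m:ℝ) + 2) ≠ 0 := by positivity
  rw [pow_succ]
  push_cast
  field_simp
  ring

lemma laguerre_C2 (α : ℝ) (m : ℕ) (x : ℝ) :
    (α+1)*(α+2) * laguerre (α+2) (m+1) x - (α+(m:ℝ)+3) * (x * laguerre (α+2) (m+1) x)
      - (α+1) * (x * laguerre (α+3) m x)
    = ((m:ℝ)+2)*(α+(m:ℝ)+3) * laguerre α (m+2) x := by
  have hA : laguerre (α+2) (m+1) x
      = (∑ k ∈ Finset.range (m+1), lcoef (α+2) (m+1) (k+1) * x^(k+1)) + lcoef (α+2) (m+1) 0 := by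
    rw [laguerre_eq_sum, Finset.sum_range_succ' (fun k => lcoef (α+2) (m+1) k * x^k) (m+1)]
    simp
  have hB : x * laguerre (α+2) (m+1) x
      = (∑ k ∈ Finset.range (m+1), lcoef (α+2) (m+1) k * x^(k+1))
        + lcoef (α+2) (m+1) (m+1) * x^(m+2) := by
    rw [laguerre_eq_sum, Finset.mul_sum,
      Finset.sum_range_succ (fun k => x * (lcoef (α+2) (m+1) k * x^k)) (m+1)]
    congr 1
    · apply Finset.sum_congr rfl; intro k _; ring
    · ring
  have hC : x * laguerre (α+3) m x
      = ∑ k ∈ Finset.range (m+1), lcoef (α+3) m k * x^(k+1) := by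
    rw [laguerre_eq_sum, Finset.mul_sum]
    apply Finset.sum_congr rfl; intro k _; ring
  have hR : laguerre α (m+2) x
      = ((∑ k ∈ Finset.range (m+1), lcoef α (m+2) (k+1) * x^(k+1))
          + lcoef α (m+2) (m+2) * x^(m+2)) + lcoef α (m+2) 0 := by
    rw [laguerre_eq_sum, Finset.sum_range_succ' (fun k => lcoef α (m+2) k * x^k) (m+2)]
    congr 1
    · rw [Finset.sum_range_succ (fun k => lcoef α (m+2) (k+1) * x^(k+1)) (m+1)]
    · simp
  have hcomb : (α+1)*(α+2) * (∑ k ∈ Finset.range (m+1), lcoef (α+2) (m+1) (k+1) * x^(k+1))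
      - (α+(m:ℝ)+3) * (∑ k ∈ Finset.range (m+1), lcoef (α+2) (m+1) k * x^(k+1))
      - (α+1) * (∑ k ∈ Finset.range (m+1), lcoef (α+3) m k * x^(k+1))
      = ((m:ℝ)+2)*(α+(m:ℝ)+3) * (∑ k ∈ Finset.range (m+1), lcoef α (m+2) (k+1) * x^(k+1)) := by
    rw [Finset.mul_sum, Finset.mul_sum, Finset.mul_sum, Finset.mul_sum,
      ← Finset.sum_sub_distrib, ← Finset.sum_sub_distrib]
    apply Finset.sum_congr rfl
    intro k hk
    have hkm : k < m + 1 := Finset.mem_range.mp hk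
    obtain ⟨j, rfl⟩ : ∃ j, m = k + j := ⟨m - k, by omega⟩
    have ht := T2 α k j
    push_cast
    linear_combination x^(k+1) * ht
  have hbd : -(α+(m:ℝ)+3) * (lcoef (α+2) (m+1) (m+1) * x^(m+2))
      = ((m:ℝ)+2)*(α+(m:ℝ)+3) * (lcoef α (m+2) (m+2) * x^(m+2)) := by
    linear_combination x^(m+2) * TBc α m
  rw [hB, hC, hR, hA]
  linear_combination hcomb + hbd - T0c α m

lemma exists_qzero (α : ℝ) (hα : α > -1) (m : ℕ) {a b : ℝ} (ha : 0 < a) (hab : a < b)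
    (hpa : laguerre α (m+1) a = 0) (hpb : laguerre α (m+1) b = 0) :
    ∃ ξ ∈ Set.Ioo a b, laguerre (α+2) m ξ = 0 := by
  have hα1 : (0:ℝ) < α + 1 := by linarith
  obtain ⟨c, hc⟩ : ∃ c : ℝ, c = ((m:ℝ)+1)/(α+1) := ⟨_, rfl⟩
  have hc' : c * (α+1) = (m:ℝ)+1 := by rw [hc]; field_simp
  have hgd : ∀ u : ℝ, HasDerivAt (fun y => Real.exp (c*y) * laguerre α (m+1) y)
      (Real.exp (c*u) * (c * laguerre α (m+1) u - laguerre (α+1) m u)) u := by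
    intro u
    have hexp : HasDerivAt (fun y : ℝ => Real.exp (c * y)) (c * Real.exp (c * u)) u := by
      simpa [mul_comm] using ((hasDerivAt_id u).const_mul c).exp
    have H := hexp.fun_mul (laguerre_hasDerivAt α m u)
    convert H using 1 <;> first | rfl | ring
  obtain ⟨ξ, hξ, hval⟩ := exists_hasDerivAt_eq_zero hab
    (fun u _ => (hgd u).continuousAt.continuousWithinAt)
    (by rw [hpa, hpb]; ring)
    (fun u _ => hgd u)
  refine ⟨ξ, hξ, ?_⟩
  have hin : c * laguerre α (m+1) ξ - laguerre (α+1) m ξ = 0 := by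
    rcases mul_eq_zero.mp hval with h | h
    · exact absurd h (Real.exp_ne_zero _)
    · exact h
  have hξ0 : (0:ℝ) < ξ := lt_trans ha hξ.1
  have hmain : ξ * laguerre (α+2) m ξ = 0 := by
    linear_combination -(laguerre_J α m ξ) - (α+1) * hin + (laguerre α (m+1) ξ) * hc'
  rcases mul_eq_zero.mp hmain with h | h
  · exact absurd h (ne_of_gt hξ0)
  · exact h

lemma no_two_qzeros (α : ℝ) (hα : α > -1) (m : ℕ) {a b : ℝ} (ha : 0 < a) (hab : a < b)
    (hqa : laguerre (α+2) m a = 0) (hqb : laguerre (α+2) m b = 0) :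
    ∃ ξ ∈ Set.Ioo a b, laguerre α (m+1) ξ = 0 := by
  have hα1 : (0:ℝ) < α + 1 := by linarith
  cases m with
  | zero => rw [laguerre_zero] at hqa; norm_num at hqa
  | succ i =>
    obtain ⟨c, hc⟩ : ∃ c : ℝ, c = -((α+(i:ℝ)+3)/(α+1)) := ⟨_, rfl⟩
    have hc' : c * (α+1) = -(α+(i:ℝ)+3) := by rw [hc]; field_simp
    have hMd : ∀ u : ℝ, 0 < u → HasDerivAt
        (fun y => Real.exp (c*y) * (y ^ (α+2:ℝ) * laguerre (α+2) (i+1) y))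
        (Real.exp (c*u) * ((c * u ^ (α+2:ℝ) + (α+2) * u ^ (α+1:ℝ)) * laguerre (α+2) (i+1) u
          + u ^ (α+2:ℝ) * -(laguerre (α+3) i u))) u := by
      intro u hu
      have hexp : HasDerivAt (fun y : ℝ => Real.exp (c * y)) (c * Real.exp (c * u)) u := by
        simpa [mul_comm] using ((hasDerivAt_id u).const_mul c).exp
      have hrpow : HasDerivAt (fun y : ℝ => y ^ (α+2:ℝ)) ((α+2) * u ^ (α+1:ℝ)) u := by
        have h := Real.hasDerivAt_rpow_const (x := u) (p := α+2) (Or.inl hu.ne')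
        have e : (α+2:ℝ) - 1 = α+1 := by ring
        rwa [e] at h
      have hlag : HasDerivAt (fun y => laguerre (α+2) (i+1) y) (-(laguerre (α+2+1) i u)) u :=
        laguerre_hasDerivAt (α+2) i u
      have e3 : (α+2+1 : ℝ) = α+3 := by ring
      rw [e3] at hlag
      have H := hexp.fun_mul (hrpow.fun_mul hlag)
      convert H using 1 <;> first | rfl | ring
    have hsub : Set.Icc a b ⊆ Set.Ioi (0:ℝ) := fun u hu => lt_of_lt_of_le ha hu.1
    obtain ⟨ξ, hξ, hval⟩ := exists_hasDerivAt_eq_zero hab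
      (fun u hu => (hMd u (hsub hu)).continuousAt.continuousWithinAt)
      (by rw [hqa, hqb]; ring)
      (fun u hu => hMd u (lt_trans ha hu.1))
    refine ⟨ξ, hξ, ?_⟩
    have hξ0 : (0:ℝ) < ξ := lt_trans ha hξ.1
    have hin : (c * ξ ^ (α+2:ℝ) + (α+2) * ξ ^ (α+1:ℝ)) * laguerre (α+2) (i+1) ξ
        + ξ ^ (α+2:ℝ) * -(laguerre (α+3) i ξ) = 0 := by
      rcases mul_eq_zero.mp hval with h | h
      · exact absurd h (Real.exp_ne_zero _)
      · exact h
    have hsplit : ξ ^ (α+2:ℝ) = ξ ^ (α+1:ℝ) * ξ := by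
      have h : (α+2:ℝ) = (α+1) + 1 := by ring
      rw [h, Real.rpow_add_one hξ0.ne']
    rw [hsplit] at hin
    have hU : (0:ℝ) < ξ ^ (α+1:ℝ) := Real.rpow_pos_of_pos hξ0 _
    -- factor out ξ^(α+1)
    have hin2 : (c * ξ + (α+2)) * laguerre (α+2) (i+1) ξ - ξ * laguerre (α+3) i ξ = 0 := by
      have hfac : ξ ^ (α+1:ℝ) * ((c * ξ + (α+2)) * laguerre (α+2) (i+1) ξ
          - ξ * laguerre (α+3) i ξ) = 0 := by linear_combination hin
      rcases mul_eq_zero.mp hfac with h | h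
      · exact absurd h (ne_of_gt hU)
      · exact h
    have hmain : ((i:ℝ)+2)*(α+(i:ℝ)+3) * laguerre α (i+2) ξ = 0 := by
      linear_combination (α+1) * hin2 - (ξ * laguerre (α+2) (i+1) ξ) * hc' - laguerre_C2 α i ξ
    have hne : ((i:ℝ)+2)*(α+(i:ℝ)+3) ≠ 0 := by
      have hi : (0:ℝ) ≤ (i:ℝ) := Nat.cast_nonneg i
      have h1 : (0:ℝ) < (i:ℝ)+2 := by linarith
      have h2 : (0:ℝ) < α+(i:ℝ)+3 := by linarith
      exact ne_of_gt (mul_pos h1 h2)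
    have : laguerre α (i+2) ξ = 0 := by
      rcases mul_eq_zero.mp hmain with h | h
      · exact absurd h hne
      · exact h
    exact this

theorem zero_of_shifted_between_consecutive_zeros (α : ℝ) (hα : α > -1) (n : ℕ)
    (hn : 1 ≤ n) (x x' : ℝ) (hlt : x < x') (hx : laguerre α n x = 0)
    (hx' : laguerre α n x' = 0) (hcons : ∀ u ∈ Set.Ioo x x', laguerre α n u ≠ 0) :
    ∃! X, X ∈ Set.Ioo x x' ∧ laguerre (α + 2) (n - 1) X = 0 := by
  obtain ⟨m, rfl⟩ : ∃ m, n = m + 1 := ⟨n - 1, by omega⟩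
  have hm1 : m + 1 - 1 = m := rfl
  rw [hm1]
  have hx0 : 0 < x := by
    by_contra h
    push_neg at h
    exact absurd hx (ne_of_gt (laguerre_pos hα _ h))
  obtain ⟨ξ, hξmem, hξ⟩ := exists_qzero α hα m hx0 hlt hx hx'
  refine ⟨ξ, ⟨hξmem, hξ⟩, ?_⟩
  rintro y ⟨hymem, hy⟩
  by_contra hne
  rcases lt_or_gt_of_ne hne with h | h
  · obtain ⟨ζ, hζmem, hζ⟩ := no_two_qzeros α hα m (lt_trans hx0 hymem.1) h hy hξ
    exact hcons ζ ⟨lt_trans hymem.1 hζmem.1, lt_trans hζmem.2 hξmem.2⟩ hζ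
  · obtain ⟨ζ, hζmem, hζ⟩ := no_two_qzeros α hα m (lt_trans hx0 hξmem.1) h hξ hy
    exact hcons ζ ⟨lt_trans hξmem.1 hζmem.1, lt_trans hζmem.2 hymem.2⟩ hζ
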